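/- If all parties measure X = σ_x and Y = σ_y, the N-qubit GHZ-state fidelity satisfies F_N ≥ ⟨B_N⟩/2^N for any state ρ, where B_N = [(σ_x + iσ_y)^{⊗N} + (σ_x − iσ_y)^{⊗N}]/2 is the Mermin–Bell operator. -/

import Mathlib

open Complex Matrix BigOperators Real
open scoped ComplexOrder

noncomputable section

/-- Tensor product of single-qubit operators. -/
def tp {N : ℕ} (M : Fin N → Matrix (Fin 2) (Fin 2) ℂ) :
    Matrix (Fin N → Fin 2) (Fin N → Fin 2) ℂ :=
  Matrix.of fun f g => ∏ k, M k (f k) (g k)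

/-- Pauli `σ_x`. -/
def σx : Matrix (Fin 2) (Fin 2) ℂ := !![0, 1; 1, 0]
/-- Pauli `σ_y`. -/
def σy : Matrix (Fin 2) (Fin 2) ℂ := !![0, -Complex.I; Complex.I, 0]

/-- GHZ state `(|0…0⟩ + |1…1⟩)/√2` on `N` qubits. -/
def ghz (N : ℕ) : (Fin N → Fin 2) → ℂ :=
  fun f =>
    ((if ∀ i, f i = 0 then 1 else 0) + (if ∀ i, f i = 1 then 1 else 0)) / Real.sqrt 2

/-- GHZ fidelity `⟨GHZ_N|ρ|GHZ_N⟩` (real part). -/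
def fid {N : ℕ} (ρ : Matrix (Fin N → Fin 2) (Fin N → Fin 2) ℂ) : ℝ :=
  (∑ f : Fin N → Fin 2, ∑ g : Fin N → Fin 2,
    (starRingEnd ℂ) (ghz N f) * ρ f g * ghz N g).re

lemma tp_rank_one {N : ℕ} (M : Matrix (Fin 2) (Fin 2) ℂ) (p q : Fin 2)
    (hM : ∀ a b, M a b = if a = p ∧ b = q then 2 else 0) (f g : Fin N → Fin 2) :
    tp (fun _ : Fin N => M) f g
      = if f = (fun _ => p) ∧ g = (fun _ => q) then (2 : ℂ) ^ N else 0 := by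
  unfold tp
  simp only [Matrix.of_apply, hM]
  by_cases h : f = (fun _ => p) ∧ g = (fun _ => q)
  · obtain ⟨hf, hg⟩ := h
    subst hf; subst hg
    simp
  · rw [if_neg h]
    rcases not_and_or.mp h with hf | hg
    · obtain ⟨k, hk⟩ := Function.ne_iff.mp hf
      exact Finset.prod_eq_zero (Finset.mem_univ k) (by simp [hk])
    · obtain ⟨k, hk⟩ := Function.ne_iff.mp hg
      exact Finset.prod_eq_zero (Finset.mem_univ k) (by simp [hk])

lemma hMplus : ∀ a b : Fin 2, (σx + Complex.I • σy) a b
    = if a = 0 ∧ b = 1 then 2 else 0 := by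
  intro a b
  fin_cases a <;> fin_cases b <;>
    simp [σx, σy, Complex.I_mul_I] <;> norm_num

lemma hMminus : ∀ a b : Fin 2, (σx - Complex.I • σy) a b
    = if a = 1 ∧ b = 0 then 2 else 0 := by
  intro a b
  fin_cases a <;> fin_cases b <;>
    simp [σx, σy, Complex.I_mul_I, sub_eq_zero] <;> norm_num

lemma double_sum_delta {N : ℕ} (c : (Fin N → Fin 2) → (Fin N → Fin 2) → ℂ)
    (p q : Fin N → Fin 2) :
    (∑ f : Fin N → Fin 2, ∑ g : Fin N → Fin 2,
      if g = p ∧ f = q then c f g else 0) = c q p := by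
  have h : ∀ f : Fin N → Fin 2,
      (∑ g : Fin N → Fin 2, if g = p ∧ f = q then c f g else 0)
        = if f = q then c f p else 0 := by
    intro f
    by_cases hf : f = q
    · subst hf; simp
    · simp [hf]
  simp only [h]
  simp

set_option maxHeartbeats 1000000 in
/-- with all parties measuring `X = σ_x`, `Y = σ_y`, the GHZ fidelity
satisfies `F_N ≥ ⟨B_N⟩/2^N` for any state `ρ`, where
`B_N = [(σ_x + iσ_y)^{⊗N} + (σ_x − iσ_y)^{⊗N}]/2` is the Mermin–Bell operator. -/
theorem fidelity_ge_mermin (N : ℕ) (hN : 0 < N)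
    (ρ : Matrix (Fin N → Fin 2) (Fin N → Fin 2) ℂ)
    (hpsd : ρ.PosSemidef) (htr : ρ.trace = 1)
    (B : Matrix (Fin N → Fin 2) (Fin N → Fin 2) ℂ)
    (hB : B = (1 / 2 : ℂ) • (tp (fun _ : Fin N => σx + Complex.I • σy)
        + tp (fun _ : Fin N => σx - Complex.I • σy))) :
    fid ρ ≥ (Matrix.trace (ρ * B)).re / 2 ^ N := by
  classical
  set z : Fin N → Fin 2 := fun _ => 0 with hz
  set o : Fin N → Fin 2 := fun _ => 1 with ho
  have hzo : z ≠ o := by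
    intro h
    have := congrFun h ⟨0, hN⟩
    simp [z, o] at this
  have hghz : ∀ f : Fin N → Fin 2, ghz N f
      = ((if f = z then 1 else 0) + (if f = o then 1 else 0)) / Real.sqrt 2 := by
    intro f
    unfold ghz
    congr 1
    congr 1
    · exact if_congr (by simp [funext_iff, z]) rfl rfl
    · exact if_congr (by simp [funext_iff, o]) rfl rfl
  have hs2 : ((Real.sqrt 2 : ℝ) : ℂ) * ((Real.sqrt 2 : ℝ) : ℂ) = 2 := by
    rw [← Complex.ofReal_mul, Real.mul_self_sqrt (by norm_num : (0:ℝ) ≤ 2)]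
    norm_num
  have hs2ne : ((Real.sqrt 2 : ℝ) : ℂ) ≠ 0 := by
    intro h
    rw [h, mul_zero] at hs2
    norm_num at hs2
  -- fidelity value
  have base : ∀ a r c : ℂ,
      a / ((Real.sqrt 2 : ℝ) : ℂ) * r * (c / ((Real.sqrt 2 : ℝ) : ℂ)) = a * c * (r / 2) := by
    intro a r c
    have h : a / ((Real.sqrt 2 : ℝ) : ℂ) * r * (c / ((Real.sqrt 2 : ℝ) : ℂ))
        = a * r * c / (((Real.sqrt 2 : ℝ) : ℂ) * ((Real.sqrt 2 : ℝ) : ℂ)) := by ring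
    rw [h, hs2]
    ring
  have hfid : fid ρ = ((ρ z z + ρ z o + ρ o z + ρ o o) / 2).re := by
    unfold fid
    congr 1
    simp only [hghz, map_div₀, map_add, apply_ite (starRingEnd ℂ), _root_.map_one, map_zero,
      Complex.conj_ofReal]
    simp only [base]
    have inner : ∀ f : Fin N → Fin 2,
        (∑ g : Fin N → Fin 2,
          ((if f = z then (1:ℂ) else 0) + if f = o then 1 else 0)
            * ((if g = z then (1:ℂ) else 0) + if g = o then 1 else 0) * (ρ f g / 2))
        = ((if f = z then (1:ℂ) else 0) + if f = o then 1 else 0) * ((ρ f z + ρ f o) / 2) := by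
      intro f
      calc (∑ g : Fin N → Fin 2,
          ((if f = z then (1:ℂ) else 0) + if f = o then 1 else 0)
            * ((if g = z then (1:ℂ) else 0) + if g = o then 1 else 0) * (ρ f g / 2))
          = ((if f = z then (1:ℂ) else 0) + if f = o then 1 else 0)
            * ∑ g : Fin N → Fin 2,
              ((if g = z then (1:ℂ) else 0) + if g = o then 1 else 0) * (ρ f g / 2) := by
            rw [Finset.mul_sum]
            exact Finset.sum_congr rfl fun g _ => by ring
        _ = _ := by
            congr 1
            simp only [add_mul, ite_mul, one_mul, zero_mul, Finset.sum_add_distrib,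
              Finset.sum_ite_eq', Finset.mem_univ, if_true]
            ring
    simp only [inner]
    simp only [add_mul, ite_mul, one_mul, zero_mul, Finset.sum_add_distrib,
      Finset.sum_ite_eq', Finset.mem_univ, if_true]
    ring
  -- trace value
  have htpB : ∀ f g, B f g = (1/2 : ℂ) *
      ((if f = z ∧ g = o then (2:ℂ)^N else 0) + (if f = o ∧ g = z then (2:ℂ)^N else 0)) := by
    intro f g
    rw [hB]
    simp only [Matrix.smul_apply, Matrix.add_apply, smul_eq_mul]
    rw [tp_rank_one _ _ _ hMplus, tp_rank_one _ _ _ hMminus]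
  have htrB : Matrix.trace (ρ * B) = (2:ℂ)^N * ((ρ z o + ρ o z) / 2) := by
    unfold Matrix.trace
    simp only [Matrix.diag_apply, Matrix.mul_apply, htpB]
    have expand : ∀ f g : Fin N → Fin 2,
        ρ f g * ((1/2 : ℂ) *
          ((if g = z ∧ f = o then (2:ℂ)^N else 0) + (if g = o ∧ f = z then (2:ℂ)^N else 0)))
        = (if g = z ∧ f = o then ρ f g * (1/2) * 2^N else 0)
          + (if g = o ∧ f = z then ρ f g * (1/2) * 2^N else 0) := by
      intro f g
      by_cases h1 : g = z ∧ f = o <;> by_cases h2 : g = o ∧ f = z <;>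
        simp only [h1, h2, if_true, if_false, if_pos, if_neg, not_false_iff] <;>
        first
          | (exfalso; exact hzo (h1.1.symm.trans h2.1) )
          | ring
      all_goals simp [h1, h2] <;> ring
    simp only [expand, Finset.sum_add_distrib]
    rw [double_sum_delta (fun f g => ρ f g * (1/2) * 2^N) z o,
      double_sum_delta (fun f g => ρ f g * (1/2) * 2^N) o z]
    ring
  -- diagonal entries are nonnegative
  have hdiag : ∀ v : Fin N → Fin 2, 0 ≤ (ρ v v).re := by
    intro v
    have h := hpsd.dotProduct_mulVec_nonneg (Pi.single v 1)
    have hv : star (Pi.single v 1) ⬝ᵥ ρ *ᵥ (Pi.single v 1) = ρ v v := by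
      simp [dotProduct, Matrix.mulVec, Pi.single_apply, apply_ite (starRingEnd ℂ),
        mul_ite, ite_mul, Finset.sum_ite_eq', Finset.mem_univ]
    rw [hv] at h
    exact (Complex.le_def.mp h).1
  -- finish
  rw [hfid, htrB]
  have h2N : ((2:ℂ)^N) = (((2:ℝ)^N : ℝ) : ℂ) := by push_cast; ring
  rw [h2N, Complex.re_ofReal_mul]
  have h2Npos : (0:ℝ) < 2 ^ N := by positivity
  rw [mul_comm ((2:ℝ)^N), mul_div_cancel_right₀ _ (ne_of_gt h2Npos)]
  have hdr : ∀ w : ℂ, (w / 2).re = w.re / 2 := by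
    intro w
    rw [show (2:ℂ) = ((2:ℝ):ℂ) by norm_num, Complex.div_ofReal_re]
  rw [hdr, hdr]
  simp only [Complex.add_re]
  have h1 := hdiag z
  have h2 := hdiag o
  linarith
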